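/- Let ĥ ∈ L¹(ℝ^d, |ξ|² dξ) ∩ appropriate spaces and define ‖h‖_s = ∫_{ℝ^d} |ξ|^s |ĥ(ξ)| dξ. For any real s ≥ 1 and integer j ≥ 2, ∫_{ℝ^d} |ξ|^s |(|·|² ĥ)^{*j}(ξ)| dξ ≤ j^s ‖h‖_{s+2} ‖h‖_2^{j−1}, where ^{*j} denotes the j-fold convolution of the function ξ ↦ |ξ|² ĥ(ξ). -/

import Mathlib

open MeasureTheory Set
open scoped ENNReal

lemma key_ineq {s : ℝ} (hs : 1 ≤ s) {a b c : ℝ} (ha : 0 ≤ a) (hb : 0 ≤ b)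
    (hc0 : 0 < c) (hc1 : c < 1) :
    (a + b) ^ s ≤ c ^ (1 - s) * a ^ s + (1 - c) ^ (1 - s) * b ^ s := by
  have h1c : (0:ℝ) < 1 - c := by linarith
  have hx : a / c ∈ Ici (0:ℝ) := div_nonneg ha hc0.le
  have hy : b / (1 - c) ∈ Ici (0:ℝ) := div_nonneg hb h1c.le
  have hcv := (convexOn_rpow hs).2 hx hy hc0.le h1c.le (by ring)
  have e1 : c • (a / c) + (1 - c) • (b / (1 - c)) = a + b := by
    have := hc0.ne'; have := h1c.ne'; simp only [smul_eq_mul]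
    field_simp
  rw [e1] at hcv
  refine hcv.trans_eq ?_
  have hcs : (0:ℝ) < c ^ s := Real.rpow_pos_of_pos hc0 s
  have h1cs : (0:ℝ) < (1 - c) ^ s := Real.rpow_pos_of_pos h1c s
  have e2 : (a / c) ^ s = a ^ s / c ^ s := Real.div_rpow ha hc0.le s
  have e3 : (b / (1 - c)) ^ s = b ^ s / (1 - c) ^ s := Real.div_rpow hb h1c.le s
  have e4 : c ^ (1 - s) = c / c ^ s := by
    rw [Real.rpow_sub hc0, Real.rpow_one]
  have e5 : (1 - c) ^ (1 - s) = (1 - c) / (1 - c) ^ s := by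
    rw [Real.rpow_sub h1c, Real.rpow_one]
  simp only [smul_eq_mul]
  rw [e2, e3, e4, e5]
  field_simp

lemma key_ineq' {s : ℝ} (hs : 1 ≤ s) (n : ℕ) {a b : ℝ} (ha : 0 ≤ a) (hb : 0 ≤ b) :
    (a + b) ^ s ≤ ((n:ℝ) + 2) ^ (s - 1) * ((n:ℝ) + 1) ^ (1 - s) * a ^ s
      + ((n:ℝ) + 2) ^ (s - 1) * b ^ s := by
  have hn1 : (0:ℝ) < (n:ℝ) + 1 := by positivity
  have hn2 : (0:ℝ) < (n:ℝ) + 2 := by positivity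
  have hc0 : (0:ℝ) < ((n:ℝ) + 1) / ((n:ℝ) + 2) := by positivity
  have hc1 : ((n:ℝ) + 1) / ((n:ℝ) + 2) < 1 := by
    rw [div_lt_one hn2]; linarith
  have h := key_ineq hs ha hb hc0 hc1
  have e1 : (((n:ℝ) + 1) / ((n:ℝ) + 2)) ^ (1 - s)
      = ((n:ℝ) + 2) ^ (s - 1) * ((n:ℝ) + 1) ^ (1 - s) := by
    rw [Real.div_rpow hn1.le hn2.le, div_eq_mul_inv, ← Real.rpow_neg hn2.le, neg_sub,
      mul_comm]
  have e2 : (1 - ((n:ℝ) + 1) / ((n:ℝ) + 2)) ^ (1 - s) = ((n:ℝ) + 2) ^ (s - 1) := by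
    have : 1 - ((n:ℝ) + 1) / ((n:ℝ) + 2) = (((n:ℝ) + 2))⁻¹ := by
      field_simp
      norm_num
    rw [this, Real.inv_rpow hn2.le, ← Real.rpow_neg hn2.le, neg_sub]
  rw [e1, e2] at h
  exact h

variable {d : ℕ}

lemma double_conv (F K : EuclideanSpace ℝ (Fin d) → ℝ≥0∞)
    (hF : Measurable F) (hK : Measurable K) :
    ∫⁻ x, ∫⁻ t, F t * K (x - t) = (∫⁻ t, F t) * ∫⁻ t, K t := by
  have hm : AEMeasurable (Function.uncurry fun (x t : EuclideanSpace ℝ (Fin d)) =>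
      F t * K (x - t)) ((volume : Measure (EuclideanSpace ℝ (Fin d))).prod volume) := by
    exact ((hF.comp measurable_snd).mul
      (hK.comp (measurable_fst.sub measurable_snd))).aemeasurable
  rw [lintegral_lintegral_swap hm]
  have : ∀ t : EuclideanSpace ℝ (Fin d), ∫⁻ x, F t * K (x - t) = F t * ∫⁻ t, K t := by
    intro t
    have hKm : Measurable fun x : EuclideanSpace ℝ (Fin d) => K (x - t) :=
      hK.comp (measurable_sub_const t)
    rw [lintegral_const_mul _ hKm, lintegral_sub_right_eq_self K t]
  simp_rw [this]
  rw [lintegral_mul_const _ hF]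

lemma wdouble (F K W : EuclideanSpace ℝ (Fin d) → ℝ≥0∞)
    (hF : Measurable F) (hK : Measurable K) (hW : Measurable W) (c₁ c₂ : ℝ≥0∞)
    (hWsub : ∀ t u, W (t + u) ≤ c₁ * W t + c₂ * W u) :
    ∫⁻ x, W x * ∫⁻ t, F t * K (x - t)
      ≤ c₁ * ((∫⁻ x, W x * F x) * ∫⁻ t, K t)
        + c₂ * ((∫⁻ t, F t) * ∫⁻ x, W x * K x) := by
  set F' : EuclideanSpace ℝ (Fin d) → ℝ≥0∞ := fun u => W u * F u with hF'
  set K' : EuclideanSpace ℝ (Fin d) → ℝ≥0∞ := fun u => W u * K u with hK'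
  have hF'm : Measurable F' := hW.mul hF
  have hK'm : Measurable K' := hW.mul hK
  have key : ∀ x : EuclideanSpace ℝ (Fin d), W x * ∫⁻ t, F t * K (x - t)
      ≤ ∫⁻ t, (c₁ * (F' t * K (x - t)) + c₂ * (F t * K' (x - t))) := by
    intro x
    have hm1 : Measurable fun t => F t * K (x - t) :=
      hF.mul (hK.comp (measurable_const.sub measurable_id))
    rw [← lintegral_const_mul _ hm1]
    refine lintegral_mono fun t => ?_
    calc W x * (F t * K (x - t)) = W (t + (x - t)) * (F t * K (x - t)) := by
          rw [add_sub_cancel]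
      _ ≤ (c₁ * W t + c₂ * W (x - t)) * (F t * K (x - t)) :=
          mul_le_mul_left (hWsub t (x - t)) _
      _ = c₁ * (F' t * K (x - t)) + c₂ * (F t * K' (x - t)) := by
          simp only [hF', hK']; ring
  calc ∫⁻ x, W x * ∫⁻ t, F t * K (x - t)
      ≤ ∫⁻ x, ∫⁻ t, (c₁ * (F' t * K (x - t)) + c₂ * (F t * K' (x - t))) :=
        lintegral_mono key
    _ = ∫⁻ x, (c₁ * (∫⁻ t, F' t * K (x - t)) + c₂ * (∫⁻ t, F t * K' (x - t))) := by
        refine lintegral_congr fun x => ?_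
        have m1 : Measurable fun t => F' t * K (x - t) :=
          hF'm.mul (hK.comp (measurable_const.sub measurable_id))
        have m2 : Measurable fun t => F t * K' (x - t) :=
          hF.mul (hK'm.comp (measurable_const.sub measurable_id))
        rw [lintegral_add_left (m1.const_mul c₁), lintegral_const_mul _ m1,
          lintegral_const_mul _ m2]
    _ = c₁ * (∫⁻ x, ∫⁻ t, F' t * K (x - t)) + c₂ * (∫⁻ x, ∫⁻ t, F t * K' (x - t)) := by
        have m1 : Measurable fun x : EuclideanSpace ℝ (Fin d) =>
            ∫⁻ t, F' t * K (x - t) := by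
          apply Measurable.lintegral_prod_right
          exact (hF'm.comp measurable_snd).mul
            (hK.comp (measurable_fst.sub measurable_snd))
        have m2 : Measurable fun x : EuclideanSpace ℝ (Fin d) =>
            ∫⁻ t, F t * K' (x - t) := by
          apply Measurable.lintegral_prod_right
          exact (hF.comp measurable_snd).mul
            (hK'm.comp (measurable_fst.sub measurable_snd))
        rw [lintegral_add_left (m1.const_mul c₁), lintegral_const_mul _ m1,
          lintegral_const_mul _ m2]
    _ = c₁ * ((∫⁻ x, W x * F x) * ∫⁻ t, K t)
        + c₂ * ((∫⁻ t, F t) * ∫⁻ x, W x * K x) := by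
        rw [double_conv F' K hF'm hK, double_conv F K' hF hK'm]

/-- `convIter g n` is the `(n+1)`-fold convolution `g * ⋯ * g` of `g` with itself. -/
noncomputable def convIter (d : ℕ) (g : EuclideanSpace ℝ (Fin d) → ℂ) :
    ℕ → EuclideanSpace ℝ (Fin d) → ℂ
  | 0 => g
  | n + 1 => MeasureTheory.convolution (convIter d g n) g
      (ContinuousLinearMap.mul ℂ ℂ) volume

variable {d : ℕ}

lemma convIter_succ_apply (g : EuclideanSpace ℝ (Fin d) → ℂ) (n : ℕ)
    (x : EuclideanSpace ℝ (Fin d)) :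
    convIter d g (n + 1) x = ∫ t, convIter d g n t * g (x - t) := by
  simp [convIter, MeasureTheory.convolution]

lemma convIter_measurable (g : EuclideanSpace ℝ (Fin d) → ℂ) (hg : Measurable g) :
    ∀ n, StronglyMeasurable (convIter d g n) := by
  intro n
  induction n with
  | zero => exact hg.stronglyMeasurable
  | succ n ih =>
    have : StronglyMeasurable (Function.uncurry fun (x t : EuclideanSpace ℝ (Fin d)) =>
        convIter d g n t * g (x - t)) := by
      apply Measurable.stronglyMeasurable
      exact (ih.measurable.comp measurable_snd).mul
        (hg.comp (measurable_fst.sub measurable_snd))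
    have h2 := StronglyMeasurable.integral_prod_right (ν := (volume : Measure (EuclideanSpace ℝ (Fin d)))) this
    have : convIter d g (n + 1) = fun x => ∫ t, convIter d g n t * g (x - t) := by
      funext x; exact convIter_succ_apply g n x
    rw [this]
    exact h2

lemma convIter_nnnorm_le (g : EuclideanSpace ℝ (Fin d) → ℂ) (n : ℕ)
    (x : EuclideanSpace ℝ (Fin d)) :
    (‖convIter d g (n + 1) x‖₊ : ℝ≥0∞)
      ≤ ∫⁻ t, (‖convIter d g n t‖₊ : ℝ≥0∞) * ‖g (x - t)‖₊ := by
  rw [convIter_succ_apply]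
  refine (enorm_integral_le_lintegral_enorm (fun t => convIter d g n t * g (x - t))).trans_eq ?_
  exact lintegral_congr fun t => (enorm_mul _ _).trans rfl

/-- for `s ≥ 1` and `j ≥ 2`,
`∫ |ξ|^s |(|·|² ĥ)^{*j}(ξ)| dξ ≤ j^s ‖h‖_{s+2} ‖h‖_2^{j-1}`,
where `‖h‖_σ = ∫ |ξ|^σ |ĥ(ξ)| dξ`. -/
theorem stmt16 (d : ℕ) (hd : 1 ≤ d) (hh : EuclideanSpace ℝ (Fin d) → ℂ)
    (hmeas : Measurable hh) (s : ℝ) (hs : 1 ≤ s) (j : ℕ) (hj : 2 ≤ j)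
    (hint2 : Integrable (fun ξ : EuclideanSpace ℝ (Fin d) => ‖ξ‖ ^ (2:ℝ) * ‖hh ξ‖))
    (hints2 : Integrable
      (fun ξ : EuclideanSpace ℝ (Fin d) => ‖ξ‖ ^ (s + 2) * ‖hh ξ‖)) :
    (∫ ξ : EuclideanSpace ℝ (Fin d),
        ‖ξ‖ ^ s * ‖convIter d (fun η => ((‖η‖ ^ (2:ℝ) : ℝ) : ℂ) * hh η) (j - 1) ξ‖)
      ≤ (j : ℝ) ^ s
          * (∫ ξ : EuclideanSpace ℝ (Fin d), ‖ξ‖ ^ (s + 2) * ‖hh ξ‖)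
          * (∫ ξ : EuclideanSpace ℝ (Fin d), ‖ξ‖ ^ (2:ℝ) * ‖hh ξ‖) ^ (j - 1) := by
  have hs0 : (0:ℝ) ≤ s := le_trans zero_le_one hs
  set g : EuclideanSpace ℝ (Fin d) → ℂ :=
    fun η => ((‖η‖ ^ (2:ℝ) : ℝ) : ℂ) * hh η with hgdef
  have hg : Measurable g :=
    (Complex.measurable_ofReal.comp (measurable_norm.pow_const _)).mul hmeas
  set A : ℝ := ∫ ξ : EuclideanSpace ℝ (Fin d), ‖ξ‖ ^ (s + 2) * ‖hh ξ‖ with hAdef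
  set B : ℝ := ∫ ξ : EuclideanSpace ℝ (Fin d), ‖ξ‖ ^ (2:ℝ) * ‖hh ξ‖ with hBdef
  have hA0 : 0 ≤ A := integral_nonneg fun ξ =>
    mul_nonneg (Real.rpow_nonneg (norm_nonneg _) _) (norm_nonneg _)
  have hB0 : 0 ≤ B := integral_nonneg fun ξ =>
    mul_nonneg (Real.rpow_nonneg (norm_nonneg _) _) (norm_nonneg _)
  set W : EuclideanSpace ℝ (Fin d) → ℝ≥0∞ :=
    fun x => ENNReal.ofReal (‖x‖ ^ s) with hWdef
  have hWm : Measurable W := (measurable_norm.pow_const _).ennreal_ofReal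
  set φ : ℕ → EuclideanSpace ℝ (Fin d) → ℝ≥0∞ :=
    fun n x => (‖convIter d g n x‖₊ : ℝ≥0∞) with hφdef
  have hφm : ∀ n, Measurable (φ n) :=
    fun n => (convIter_measurable g hg n).measurable.nnnorm.coe_nnreal_ennreal
  have hgnnm : Measurable fun x => (‖g x‖₊ : ℝ≥0∞) := hg.nnnorm.coe_nnreal_ennreal
  -- pointwise identity for ‖g x‖
  have gnn : ∀ x, (‖g x‖₊ : ℝ≥0∞)
      = ENNReal.ofReal (‖x‖ ^ (2:ℝ) * ‖hh x‖) := by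
    intro x
    rw [← ENNReal.ofReal_coe_nnreal, coe_nnnorm]
    congr 1
    rw [hgdef]
    rw [norm_mul, Complex.norm_real, Real.norm_eq_abs,
      abs_of_nonneg (Real.rpow_nonneg (norm_nonneg _) _)]
  have hBlint : ∫⁻ x, (‖g x‖₊ : ℝ≥0∞) = ENNReal.ofReal B := by
    simp_rw [gnn]
    rw [← ofReal_integral_eq_lintegral_ofReal hint2 (ae_of_all _ fun ξ =>
      mul_nonneg (Real.rpow_nonneg (norm_nonneg _) _) (norm_nonneg _))]
  have hAlint : ∫⁻ x, W x * (‖g x‖₊ : ℝ≥0∞) = ENNReal.ofReal A := by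
    have hpt : ∀ x : EuclideanSpace ℝ (Fin d), W x * (‖g x‖₊ : ℝ≥0∞)
        = ENNReal.ofReal (‖x‖ ^ (s + 2) * ‖hh x‖) := by
      intro x
      rw [gnn, hWdef, ← ENNReal.ofReal_mul (Real.rpow_nonneg (norm_nonneg _) _)]
      congr 1
      rw [← mul_assoc, ← Real.rpow_add' (norm_nonneg x) (ne_of_gt (by linarith : (0:ℝ) < s + 2))]
    simp_rw [hpt]
    rw [← ofReal_integral_eq_lintegral_ofReal hints2 (ae_of_all _ fun ξ =>
      mul_nonneg (Real.rpow_nonneg (norm_nonneg _) _) (norm_nonneg _))]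
  -- main induction
  have main : ∀ n : ℕ, (∫⁻ x, φ n x) ≤ ENNReal.ofReal (B ^ (n + 1)) ∧
      (∫⁻ x, W x * φ n x) ≤ ENNReal.ofReal (((n:ℝ) + 1) ^ s * A * B ^ n) := by
    intro n
    induction n with
    | zero =>
      constructor
      · rw [pow_one]
        exact le_of_eq hBlint
      · refine le_of_eq (hAlint.trans ?_)
        norm_num
    | succ n ih =>
      constructor
      · calc ∫⁻ x, φ (n + 1) x
            ≤ ∫⁻ x, ∫⁻ t, φ n t * (‖g (x - t)‖₊ : ℝ≥0∞) :=
              lintegral_mono (convIter_nnnorm_le g n)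
          _ = (∫⁻ t, φ n t) * ∫⁻ t, (‖g t‖₊ : ℝ≥0∞) :=
              double_conv _ _ (hφm n) hgnnm
          _ ≤ ENNReal.ofReal (B ^ (n + 1)) * ENNReal.ofReal B :=
              mul_le_mul' ih.1 (le_of_eq hBlint)
          _ = ENNReal.ofReal (B ^ (n + 2)) := by
              rw [← ENNReal.ofReal_mul (pow_nonneg hB0 _), ← pow_succ]
      · set c₁ : ℝ≥0∞ := ENNReal.ofReal (((n:ℝ) + 2) ^ (s - 1) * ((n:ℝ) + 1) ^ (1 - s))
          with hc₁def
        set c₂ : ℝ≥0∞ := ENNReal.ofReal (((n:ℝ) + 2) ^ (s - 1)) with hc₂def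
        have hc₁0 : (0:ℝ) ≤ ((n:ℝ) + 2) ^ (s - 1) * ((n:ℝ) + 1) ^ (1 - s) :=
          mul_nonneg (Real.rpow_nonneg (by positivity) _)
            (Real.rpow_nonneg (by positivity) _)
        have hc₂0 : (0:ℝ) ≤ ((n:ℝ) + 2) ^ (s - 1) := Real.rpow_nonneg (by positivity) _
        have hWsub : ∀ t u : EuclideanSpace ℝ (Fin d),
            W (t + u) ≤ c₁ * W t + c₂ * W u := by
          intro t u
          have h1 : ‖t + u‖ ^ s ≤ (‖t‖ + ‖u‖) ^ s :=
            Real.rpow_le_rpow (norm_nonneg _) (norm_add_le t u) hs0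
          have h2 := key_ineq' hs n (norm_nonneg t) (norm_nonneg u)
          calc W (t + u) ≤ ENNReal.ofReal (((n:ℝ) + 2) ^ (s - 1) * ((n:ℝ) + 1) ^ (1 - s)
                * ‖t‖ ^ s + ((n:ℝ) + 2) ^ (s - 1) * ‖u‖ ^ s) :=
                ENNReal.ofReal_le_ofReal (h1.trans h2)
            _ = c₁ * W t + c₂ * W u := by
                simp only [hc₁def, hc₂def, hWdef]
                rw [← ENNReal.ofReal_mul hc₁0, ← ENNReal.ofReal_mul hc₂0,
                  ← ENNReal.ofReal_add (mul_nonneg hc₁0 (Real.rpow_nonneg (norm_nonneg _) _))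
                    (mul_nonneg hc₂0 (Real.rpow_nonneg (norm_nonneg _) _))]
        calc ∫⁻ x, W x * φ (n + 1) x
            ≤ ∫⁻ x, W x * ∫⁻ t, φ n t * (‖g (x - t)‖₊ : ℝ≥0∞) :=
              lintegral_mono fun x => mul_le_mul_right (convIter_nnnorm_le g n x) _
          _ ≤ c₁ * ((∫⁻ x, W x * φ n x) * ∫⁻ t, (‖g t‖₊ : ℝ≥0∞))
              + c₂ * ((∫⁻ t, φ n t) * ∫⁻ x, W x * (‖g x‖₊ : ℝ≥0∞)) :=
              wdouble (φ n) _ W (hφm n) hgnnm hWm c₁ c₂ hWsub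
          _ ≤ c₁ * (ENNReal.ofReal (((n:ℝ) + 1) ^ s * A * B ^ n) * ENNReal.ofReal B)
              + c₂ * (ENNReal.ofReal (B ^ (n + 1)) * ENNReal.ofReal A) := by
              refine add_le_add (mul_le_mul_right ?_ _) (mul_le_mul_right ?_ _)
              · exact mul_le_mul' ih.2 (le_of_eq hBlint)
              · exact mul_le_mul' ih.1 (le_of_eq hAlint)
          _ = ENNReal.ofReal ((((n:ℝ) + 2) ^ (s - 1) * ((n:ℝ) + 1) ^ (1 - s))
                * (((n:ℝ) + 1) ^ s * A * B ^ n * B)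
              + ((n:ℝ) + 2) ^ (s - 1) * (B ^ (n + 1) * A)) := by
              rw [hc₁def, hc₂def,
                ← ENNReal.ofReal_mul (mul_nonneg (mul_nonneg
                  (Real.rpow_nonneg (by positivity) _) hA0) (pow_nonneg hB0 _)),
                ← ENNReal.ofReal_mul (pow_nonneg hB0 _),
                ← ENNReal.ofReal_mul hc₁0, ← ENNReal.ofReal_mul hc₂0,
                ← ENNReal.ofReal_add (by positivity) (by positivity)]
          _ ≤ ENNReal.ofReal ((((n + 1:ℕ):ℝ) + 1) ^ s * A * B ^ (n + 1)) := by
              apply ENNReal.ofReal_le_ofReal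
              apply le_of_eq
              have e1 : ((n:ℝ) + 1) ^ (1 - s) * ((n:ℝ) + 1) ^ s = (n:ℝ) + 1 := by
                rw [← Real.rpow_add (by positivity)]
                norm_num
              have e2 : ((n:ℝ) + 2) ^ (s - 1) * ((n:ℝ) + 2) = ((n:ℝ) + 2) ^ s := by
                nth_rewrite 2 [← Real.rpow_one ((n:ℝ) + 2)]
                rw [← Real.rpow_add (by positivity)]
                norm_num
              have e3 : ((n + 1:ℕ):ℝ) + 1 = (n:ℝ) + 2 := by push_cast; ring
              rw [e3]
              calc (((n:ℝ) + 2) ^ (s - 1) * ((n:ℝ) + 1) ^ (1 - s))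
                    * (((n:ℝ) + 1) ^ s * A * B ^ n * B)
                  + ((n:ℝ) + 2) ^ (s - 1) * (B ^ (n + 1) * A)
                  = ((n:ℝ) + 2) ^ (s - 1) * ((((n:ℝ) + 1) ^ (1 - s) * ((n:ℝ) + 1) ^ s)
                      * (A * B ^ (n + 1))) + ((n:ℝ) + 2) ^ (s - 1) * (B ^ (n + 1) * A) := by
                    rw [pow_succ]; ring
                _ = (((n:ℝ) + 2) ^ (s - 1) * ((n:ℝ) + 2)) * (A * B ^ (n + 1)) := by
                    rw [e1]; ring
                _ = ((n:ℝ) + 2) ^ s * A * B ^ (n + 1) := by rw [e2]; ring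
      -- normalize cast in succ statement
  have h1j : 1 ≤ j := le_trans one_le_two hj
  obtain ⟨-, hmain⟩ := main (j - 1)
  have hjcast : ((j - 1 : ℕ) : ℝ) + 1 = (j : ℝ) := by
    rw [Nat.cast_sub h1j]; push_cast; ring
  rw [hjcast] at hmain
  -- convert the Bochner integral
  have fmeas : Measurable fun ξ : EuclideanSpace ℝ (Fin d) =>
      ‖ξ‖ ^ s * ‖convIter d g (j - 1) ξ‖ := by
    have : Measurable fun ξ : EuclideanSpace ℝ (Fin d) =>
        ‖convIter d g (j - 1) ξ‖ := (convIter_measurable g hg (j - 1)).measurable.norm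
    exact (measurable_norm.pow_const _).mul this
  have hnn : ∀ ξ : EuclideanSpace ℝ (Fin d),
      0 ≤ ‖ξ‖ ^ s * ‖convIter d g (j - 1) ξ‖ := fun ξ =>
    mul_nonneg (Real.rpow_nonneg (norm_nonneg _) _) (norm_nonneg _)
  rw [integral_eq_lintegral_of_nonneg_ae (ae_of_all _ hnn) fmeas.aestronglyMeasurable]
  have hpt : ∀ ξ : EuclideanSpace ℝ (Fin d),
      ENNReal.ofReal (‖ξ‖ ^ s * ‖convIter d g (j - 1) ξ‖)
        = W ξ * φ (j - 1) ξ := by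
    intro ξ
    rw [ENNReal.ofReal_mul (Real.rpow_nonneg (norm_nonneg _) _),
      ← coe_nnnorm (convIter d g (j - 1) ξ), ENNReal.ofReal_coe_nnreal]
  have hbound : (∫⁻ ξ, ENNReal.ofReal (‖ξ‖ ^ s * ‖convIter d g (j - 1) ξ‖))
      ≤ ENNReal.ofReal ((j:ℝ) ^ s * A * B ^ (j - 1)) := by
    simp_rw [hpt]
    exact hmain
  have hRHS0 : 0 ≤ (j:ℝ) ^ s * A * B ^ (j - 1) :=
    mul_nonneg (mul_nonneg (Real.rpow_nonneg (by positivity) _) hA0) (pow_nonneg hB0 _)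
  exact ENNReal.toReal_le_of_le_ofReal hRHS0 hbound
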